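/- Let φ(m⁺, m⁻) = -(1/2)‖(m⁺+m⁻)/2‖² - (ε/2)e₂·(m⁺-m⁻) - (1/(2β))(S(m⁺)+S(m⁻)), where S is rotationally invariant (S(m) depends only on ‖m‖₂). Let R_X denote reflection across the e₁ axis. Then for any m⁺₀, m⁻₀ ∈ ℝ², φ(m⁺₀, m⁻₀) - (1/2)[φ(m⁺₀, R_X m⁺₀) + φ(R_X m⁻₀, m⁻₀)] = (1/8)(m⁺₀ - R_X m⁻₀)·(R_X m⁺₀ - m⁻₀). -/

import Mathlib

open Real

noncomputable abbrev E2 : Type := EuclideanSpace ℝ (Fin 2)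

noncomputable def toE (x y : ℝ) : E2 := (WithLp.equiv 2 (Fin 2 → ℝ)).symm ![x, y]

noncomputable def e2 : E2 := toE 0 1

/-- Reflection across the `e₁` axis: `(x,y) ↦ (x,-y)`. -/
noncomputable def RX (v : E2) : E2 := v - (2 * (inner ℝ v e2 : ℝ)) • e2

lemma e2_apply_0 : e2 0 = 0 := rfl
lemma e2_apply_1 : e2 1 = 1 := rfl

lemma inner_E2 (v w : E2) : (inner ℝ v w : ℝ) = v 0 * w 0 + v 1 * w 1 := by
  simp [PiLp.inner_apply, Fin.sum_univ_two]; ring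

lemma RX_apply_0 (v : E2) : RX v 0 = v 0 := by
  simp [RX, inner_E2, e2_apply_0, e2_apply_1]
lemma RX_apply_1 (v : E2) : RX v 1 = -v 1 := by
  simp [RX, inner_E2, e2_apply_0, e2_apply_1]; ring

lemma norm_sq_E2 (v : E2) : ‖v‖ ^ 2 = v 0 ^ 2 + v 1 ^ 2 := by
  rw [← real_inner_self_eq_norm_sq, inner_E2]; ring

lemma norm_RX (v : E2) : ‖RX v‖ = ‖v‖ := by
  have h : ‖RX v‖ ^ 2 = ‖v‖ ^ 2 := by
    rw [norm_sq_E2, norm_sq_E2, RX_apply_0, RX_apply_1]; ring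
  nlinarith [norm_nonneg (RX v), norm_nonneg v]

/-- The reflection identity for the mean field free energy
`φ(m⁺,m⁻) = -(1/2)‖(m⁺+m⁻)/2‖² - (ε/2)⟨e₂, m⁺-m⁻⟩ - (1/(2β))(S(m⁺)+S(m⁻))`,
`S` rotationally invariant. -/
theorem stmt5 (β ε : ℝ) (hβ : 0 < β) (hε : 0 < ε)
    (S : E2 → ℝ) (hS : ∀ v w : E2, ‖v‖ = ‖w‖ → S v = S w) :
    ∀ mp0 mm0 : E2,
      let φ : E2 → E2 → ℝ := fun mp mm =>
        -(1/2) * ‖(1/2 : ℝ) • (mp + mm)‖ ^ 2 - (ε/2) * (inner ℝ e2 (mp - mm) : ℝ)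
          - (1/(2*β)) * (S mp + S mm)
      φ mp0 mm0 - (1/2) * (φ mp0 (RX mp0) + φ (RX mm0) mm0)
        = (1/8) * (inner ℝ (mp0 - RX mm0) (RX mp0 - mm0) : ℝ) := by
  intro mp0 mm0 φ
  have hSp : S (RX mp0) = S mp0 := hS _ _ (norm_RX mp0)
  have hSm : S (RX mm0) = S mm0 := hS _ _ (norm_RX mm0)
  simp only [φ, norm_sq_E2, inner_E2, hSp, hSm]
  simp only [PiLp.smul_apply, PiLp.add_apply, PiLp.sub_apply, RX_apply_0, RX_apply_1,
    e2_apply_0, e2_apply_1, smul_eq_mul]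
  have hβ' : β ≠ 0 := ne_of_gt hβ
  field_simp
  ring
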